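/- Let K be convex with A = {w ∈ S⊥ : ‖w‖ ≤ R} ⊆ K and B = {w ∈ S : ‖w‖ ≤ r} ⊆ K for orthogonal complementary subspaces S, S⊥. Then K contains the Euclidean ball of radius rR/√(r² + R²) centered at the origin. -/

import Mathlib

/-- If a convex set `K` contains the ball of radius `R` in a subspace `S⊥` and the ball of
radius `r` in the orthogonal complement subspace `S`, then `K` contains the Euclidean ball
of radius `rR/√(r² + R²)` centered at the origin. -/
theorem convex_contains_ball_of_two_subspace_balls {d : ℕ}
    (K : Set (EuclideanSpace ℝ (Fin d))) (hK : Convex ℝ K)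
    (S : Submodule ℝ (EuclideanSpace ℝ (Fin d)))
    (R r : ℝ) (hR : 0 < R) (hr : 0 < r)
    (hA : {w : EuclideanSpace ℝ (Fin d) | w ∈ Sᗮ ∧ ‖w‖ ≤ R} ⊆ K)
    (hB : {w : EuclideanSpace ℝ (Fin d) | w ∈ S ∧ ‖w‖ ≤ r} ⊆ K) :
    Metric.closedBall (0 : EuclideanSpace ℝ (Fin d))
      (r * R / Real.sqrt (r ^ 2 + R ^ 2)) ⊆ K := by
  intro x hx
  rw [Metric.mem_closedBall, dist_zero_right] at hx
  -- orthogonal decomposition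
  set xS : EuclideanSpace ℝ (Fin d) := (S.orthogonalProjection x : EuclideanSpace ℝ (Fin d)) with hxS
  have hxSmem : xS ∈ S := (S.orthogonalProjection x).2
  set xO : EuclideanSpace ℝ (Fin d) := x - xS with hxO
  have hxOmem : xO ∈ Sᗮ := Submodule.sub_starProjection_mem_orthogonal (K := S) x
  have hdecomp : x = xS + xO := by simp [hxO]
  have hinner : @inner ℝ _ _ xS xO = 0 :=
    Submodule.inner_right_of_mem_orthogonal hxSmem hxOmem
  set a : ℝ := ‖xO‖ with ha
  set b : ℝ := ‖xS‖ with hb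
  have hinner2 : @inner ℝ _ _ xO xS = 0 := by rw [real_inner_comm]; exact hinner
  have hnorm : ‖x‖ ^ 2 = b ^ 2 + a ^ 2 := by
    rw [hdecomp, ← real_inner_self_eq_norm_sq, inner_add_add_self, hinner, hinner2,
      real_inner_self_eq_norm_sq, real_inner_self_eq_norm_sq]
    ring
  have ha0 : 0 ≤ a := norm_nonneg _
  have hb0 : 0 ≤ b := norm_nonneg _
  have hsq : 0 < r ^ 2 + R ^ 2 := by positivity
  -- key inequality a*r + b*R ≤ r*R
  have hx2 : ‖x‖ ^ 2 ≤ (r * R) ^ 2 / (r ^ 2 + R ^ 2) := by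
    have h1 : ‖x‖ ^ 2 ≤ (r * R / Real.sqrt (r ^ 2 + R ^ 2)) ^ 2 := by
      apply pow_le_pow_left₀ (norm_nonneg _) hx
    calc ‖x‖ ^ 2 ≤ (r * R / Real.sqrt (r ^ 2 + R ^ 2)) ^ 2 := h1
      _ = (r * R) ^ 2 / (r ^ 2 + R ^ 2) := by
          rw [div_pow, Real.sq_sqrt hsq.le]
  have hkey : a * r + b * R ≤ r * R := by
    have h2 : (b ^ 2 + a ^ 2) * (r ^ 2 + R ^ 2) ≤ (r * R) ^ 2 := by
      rw [← hnorm]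
      calc ‖x‖ ^ 2 * (r ^ 2 + R ^ 2) ≤ ((r * R) ^ 2 / (r ^ 2 + R ^ 2)) * (r ^ 2 + R ^ 2) := by
            exact mul_le_mul_of_nonneg_right hx2 hsq.le
        _ = (r * R) ^ 2 := by field_simp
    nlinarith [sq_nonneg (a * R - b * r), sq_nonneg (a * r + b * R), mul_pos hr hR,
      mul_nonneg (mul_nonneg ha0 hr.le) (mul_nonneg hb0 hR.le)]
  -- weights
  set t : ℝ := b / r with ht
  set s : ℝ := a / R with hs
  have ht0 : 0 ≤ t := by positivity
  have hs0 : 0 ≤ s := by positivity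
  have hts : t + s ≤ 1 := by
    rw [ht, hs, div_add_div _ _ hr.ne' hR.ne', div_le_one (by positivity)]
    nlinarith
  -- points
  set p : EuclideanSpace ℝ (Fin d) := if b = 0 then 0 else (r / b) • xS with hp
  set q : EuclideanSpace ℝ (Fin d) := if a = 0 then 0 else (R / a) • xO with hq
  have hpK : p ∈ K := by
    apply hB
    by_cases hb' : b = 0
    · simp [hp, hb', S.zero_mem, hr.le]
    · refine ⟨?_, ?_⟩
      · simp only [hp, if_neg hb']; exact S.smul_mem _ hxSmem
      · simp only [hp, if_neg hb', norm_smul, ← hb, Real.norm_eq_abs,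
          abs_of_nonneg (div_nonneg hr.le hb0)]
        rw [div_mul_cancel₀ _ hb']
  have hqK : q ∈ K := by
    apply hA
    by_cases ha' : a = 0
    · simp [hq, ha', Submodule.zero_mem, hR.le]
    · refine ⟨?_, ?_⟩
      · simp only [hq, if_neg ha']; exact Submodule.smul_mem _ _ hxOmem
      · simp only [hq, if_neg ha', norm_smul, ← ha, Real.norm_eq_abs,
          abs_of_nonneg (div_nonneg hR.le ha0)]
        rw [div_mul_cancel₀ _ ha']
  have h0K : (0 : EuclideanSpace ℝ (Fin d)) ∈ K := by
    apply hB; exact ⟨S.zero_mem, by simp [hr.le]⟩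
  have htp : t • p = xS := by
    by_cases hb' : b = 0
    · have : xS = 0 := by rwa [hb, norm_eq_zero] at hb'
      simp [ht, hb', this]
    · rw [hp, if_neg hb', ht, smul_smul, div_mul_div_comm, mul_comm b r,
        div_self (by positivity : r * b ≠ 0), one_smul]
  have hsq' : s • q = xO := by
    by_cases ha' : a = 0
    · have : xO = 0 := by rwa [ha, norm_eq_zero] at ha'
      simp [hs, ha', this]
    · rw [hq, if_neg ha', hs, smul_smul, div_mul_div_comm, mul_comm a R,
        div_self (by positivity : R * a ≠ 0), one_smul]
  have hxeq : x = t • p + s • q + (1 - t - s) • (0 : EuclideanSpace ℝ (Fin d)) := by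
    rw [htp, hsq', smul_zero, add_zero, hdecomp]
  rw [hxeq]
  have hu0 : (0:ℝ) ≤ 1 - t - s := by linarith
  have hsum : ∑ i : Fin 3, ![t, s, 1 - t - s] i • ![p, q, 0] i ∈ K := by
    apply hK.sum_mem
    · intro i _; fin_cases i <;> simp <;> linarith
    · simp [Fin.sum_univ_three]
    · intro i _
      fin_cases i
      · simpa using hpK
      · simpa using hqK
      · simpa using h0K
  simpa [Fin.sum_univ_three] using hsum
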